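/- arXiv:1905.01275 — 3 statements merged into one kernel-verified Lean document; each statement's English description precedes it below -/
import Mathlib

section
/- For two orthogonal projections E and F on a finite-dimensional Hilbert space, 1 - ‖EF - E∧F‖ equals the least eigenvalue of E + F that is strictly greater than 0 (equivalently, the least nontrivial eigenvalue of E+F, where 0 and 2 are the trivial eigenvalues), provided E + F has an eigenvalue in the open interval (0,2). -/
/-- The orthogonal projection onto a submodule, as a continuous linear endomorphism. -/
noncomputable def projOnto {H : Type*} [NormedAddCommGroup H] [InnerProductSpace ℂ H]
    [FiniteDimensional ℂ H] (K : Submodule ℂ H) : H →L[ℂ] H :=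
  K.subtypeL.comp (K.orthogonalProjectionOnto)

set_option maxHeartbeats 1600000 in
/-- For orthogonal projections `E`, `F` on a finite-dimensional Hilbert space,
`1 - ‖EF - E∧F‖` is the least eigenvalue of `E + F` strictly greater than `0`,
provided `E + F` has an eigenvalue in the open interval `(0, 2)`. -/
theorem aklt_stmt_1 {H : Type*} [NormedAddCommGroup H] [InnerProductSpace ℂ H]
    [FiniteDimensional ℂ H] (E F : H →L[ℂ] H)
    (hE₁ : IsIdempotentElem E) (hE₂ : IsSelfAdjoint E)
    (hF₁ : IsIdempotentElem F) (hF₂ : IsSelfAdjoint F)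
    (hex : ∃ μ : ℝ, 0 < μ ∧ μ < 2 ∧
      Module.End.HasEigenvalue ((E + F).toLinearMap) (μ : ℂ)) :
    IsLeast {μ : ℝ | 0 < μ ∧ Module.End.HasEigenvalue ((E + F).toLinearMap) (μ : ℂ)}
      (1 - ‖E * F - projOnto (LinearMap.range (E : H →ₗ[ℂ] H) ⊓ LinearMap.range (F : H →ₗ[ℂ] H))‖) := by
  set P : H →L[ℂ] H := projOnto (LinearMap.range (E : H →ₗ[ℂ] H) ⊓ LinearMap.range (F : H →ₗ[ℂ] H)) with hPdef
  set A : H →L[ℂ] H := E * F - P with hAdef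
  set c : ℝ := ‖A‖ with hcdef
  clear_value c
  -- basic pointwise facts
  have hEfix : ∀ x : H, x ∈ LinearMap.range (E : H →ₗ[ℂ] H) → E x = x := by
    rintro _ ⟨y, rfl⟩
    simpa [ContinuousLinearMap.mul_apply] using DFunLike.congr_fun hE₁ y
  have hFfix : ∀ x : H, x ∈ LinearMap.range (F : H →ₗ[ℂ] H) → F x = x := by
    rintro _ ⟨y, rfl⟩
    simpa [ContinuousLinearMap.mul_apply] using DFunLike.congr_fun hF₁ y
  have hPmem : ∀ x : H, P x ∈ LinearMap.range (E : H →ₗ[ℂ] H) ⊓ LinearMap.range (F : H →ₗ[ℂ] H) := by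
    intro x
    simp only [hPdef, projOnto, ContinuousLinearMap.comp_apply, Submodule.subtypeL_apply]
    exact SetLike.coe_mem _
  have hPfix : ∀ x : H, x ∈ LinearMap.range (E : H →ₗ[ℂ] H) ⊓ LinearMap.range (F : H →ₗ[ℂ] H) → P x = x := by
    intro x hx
    simp only [hPdef, projOnto, ContinuousLinearMap.comp_apply, Submodule.subtypeL_apply]
    exact Submodule.starProjection_eq_self_iff.mpr hx
  have hPsa : IsSelfAdjoint P := isSelfAdjoint_starProjection _
  have hEP : E * P = P := by
    ext x
    simp only [ContinuousLinearMap.mul_apply]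
    exact hEfix _ (Submodule.mem_inf.mp (hPmem x)).1
  have hFP : F * P = P := by
    ext x
    simp only [ContinuousLinearMap.mul_apply]
    exact hFfix _ (Submodule.mem_inf.mp (hPmem x)).2
  have hPE : P * E = P := by
    have h := congrArg star hEP
    rwa [star_mul, hPsa.star_eq, hE₂.star_eq] at h
  have hPF : P * F = P := by
    have h := congrArg star hFP
    rwa [star_mul, hPsa.star_eq, hF₂.star_eq] at h
  have hPP : P * P = P := by
    ext x
    simp only [ContinuousLinearMap.mul_apply]
    exact hPfix _ (hPmem x)
  -- pointwise versions
  have hfE : ∀ x : H, E (E x) = E x := fun x => hEfix _ ⟨x, rfl⟩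
  have hfF : ∀ x : H, F (F x) = F x := fun x => hFfix _ ⟨x, rfl⟩
  have hPEf : ∀ x : H, P (E x) = P x := fun x => by
    simpa [ContinuousLinearMap.mul_apply] using DFunLike.congr_fun hPE x
  have hPFf : ∀ x : H, P (F x) = P x := fun x => by
    simpa [ContinuousLinearMap.mul_apply] using DFunLike.congr_fun hPF x
  have hPPf : ∀ x : H, P (P x) = P x := fun x => by
    simpa [ContinuousLinearMap.mul_apply] using DFunLike.congr_fun hPP x
  -- B = A*ᴴ A = F E F - P
  set B : H →L[ℂ] H := star A * A with hBdef
  have hBsa : IsSelfAdjoint B := IsSelfAdjoint.star_mul_self A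
  have hBnorm : ‖B‖ = c * c := by
    rw [hBdef, hcdef]; exact CStarRing.norm_star_mul_self
  have hAstar : star A = F * E - P := by
    rw [hAdef, star_sub, star_mul, hE₂.star_eq, hF₂.star_eq, hPsa.star_eq]
  have h1 : F * E * (E * F) = F * E * F := by
    rw [mul_assoc F E (E * F), ← mul_assoc E E F, hE₁, ← mul_assoc]
  have h2 : F * E * P = P := by rw [mul_assoc, hEP, hFP]
  have h3 : P * (E * F) = P := by rw [← mul_assoc, hPE, hPF]
  have hBeq : B = F * E * F - P := by
    rw [hBdef, hAstar, hAdef, sub_mul, mul_sub, mul_sub, h1, h2, h3, hPP, sub_self, sub_zero]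
  have hBf : ∀ x : H, B x = F (E (F x)) - P x := fun x => by
    simpa [ContinuousLinearMap.mul_apply, ContinuousLinearMap.sub_apply] using
      DFunLike.congr_fun hBeq x
  have h_reB : ∀ x : H, B.reApplyInnerSelf x = ‖A x‖ ^ 2 := by
    intro x
    rw [ContinuousLinearMap.reApplyInnerSelf_apply]
    have hBx : B x = ContinuousLinearMap.adjoint A (A x) := by
      rw [hBdef]
      simp [ContinuousLinearMap.mul_apply, ContinuousLinearMap.star_eq_adjoint]
    rw [hBx, ContinuousLinearMap.adjoint_inner_left, inner_self_eq_norm_sq]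
  have hc0 : (0:ℝ) ≤ c := hcdef ▸ norm_nonneg A
  -- lower bound
  have key : ∀ μ : ℝ, 0 < μ → Module.End.HasEigenvalue ((E + F).toLinearMap) (μ : ℂ) →
      1 - c ≤ μ := by
    intro μ hμpos hev
    rcases le_or_gt 1 μ with hμ1 | hμ1
    · linarith
    obtain ⟨x, hx⟩ := hev.exists_hasEigenvector
    have hxne : x ≠ 0 := hx.2
    have hTx : E x + F x = (μ : ℂ) • x := by
      have h := Module.End.mem_eigenspace_iff.mp hx.1
      simpa [ContinuousLinearMap.coe_coe, ContinuousLinearMap.add_apply] using h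
    have hPx : P x = 0 := by
      have h := congrArg (fun v => P v) hTx
      simp only [map_add, map_smul] at h
      rw [hPEf x, hPFf x] at h
      have h2 : ((2 : ℂ) - (μ:ℂ)) • P x = 0 := by
        rw [sub_smul, two_smul, h, sub_self]
      rcases smul_eq_zero.mp h2 with h3 | h3
      · exfalso
        have : (μ:ℂ) = 2 := by
          have := sub_eq_zero.mp h3
          exact this.symm
        have : μ = 2 := by exact_mod_cast this
        linarith
      · exact h3
    have hEFx : E (F x) = ((μ:ℂ) - 1) • E x := by
      have h := congrArg (fun v => E v) hTx
      simp only [map_add, map_smul] at h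
      rw [hfE x] at h
      rw [sub_smul, one_smul]
      exact eq_sub_of_add_eq' h
    have hFEx : F (E x) = ((μ:ℂ) - 1) • F x := by
      have h := congrArg (fun v => F v) hTx
      simp only [map_add, map_smul] at h
      rw [hfF x] at h
      rw [sub_smul, one_smul]
      exact eq_sub_of_add_eq h
    have hFxne : F x ≠ 0 := by
      intro h0
      have hEx : E x = (μ:ℂ) • x := by
        have := hTx
        rw [h0, add_zero] at this
        exact this
      have h4 := hfE x
      rw [hEx, map_smul, hEx, smul_smul] at h4
      have h5 : ((μ:ℂ) * μ - μ) • x = 0 := by rw [sub_smul, h4, sub_self]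
      rcases smul_eq_zero.mp h5 with h6 | h6
      · have h7 : μ * μ - μ = 0 := by exact_mod_cast h6
        nlinarith
      · exact hxne h6
    have hBFx : B (F x) = (((μ:ℂ) - 1) ^ 2) • F x := by
      rw [hBf (F x), hfF x, hEFx, map_smul, hFEx, hPFf x, hPx, sub_zero, smul_smul, ← sq]
    have hnorm := B.le_opNorm (F x)
    rw [hBFx, norm_smul] at hnorm
    have hFxpos : (0:ℝ) < ‖F x‖ := norm_pos_iff.mpr hFxne
    have hsc : ‖((μ:ℂ) - 1) ^ 2‖ ≤ ‖B‖ := le_of_mul_le_mul_right hnorm hFxpos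
    have hval : ‖((μ:ℂ) - 1) ^ 2‖ = (1 - μ)^2 := by
      rw [norm_pow, show (μ:ℂ) - 1 = ((μ - 1 : ℝ) : ℂ) by push_cast; ring,
        Complex.norm_real, Real.norm_eq_abs, sq_abs]
      ring
    rw [hval, hBnorm] at hsc
    have h1 : 1 - μ ≤ c := by nlinarith [hsc, hc0, hμ1]
    linarith
  constructor
  · -- membership
    simp only [Set.mem_setOf_eq]
    obtain ⟨μ₀, hμ₀pos, hμ₀lt, hev₀⟩ := hex
    rcases eq_or_lt_of_le hc0 with hc | hc
    · -- c = 0 : then E*F = P and the eigenvalue μ₀ must be 1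
      have hA0 : A = 0 := by
        rw [hcdef] at hc
        exact norm_eq_zero.mp hc.symm
      have hEFP : E * F = P := by rwa [hAdef, sub_eq_zero] at hA0
      have hFEP : F * E = P := by
        have h := congrArg star hEFP
        rwa [star_mul, hE₂.star_eq, hF₂.star_eq, hPsa.star_eq] at h
      obtain ⟨x, hx⟩ := hev₀.exists_hasEigenvector
      have hxne : x ≠ 0 := hx.2
      have hTx : E x + F x = (μ₀ : ℂ) • x := by
        have h := Module.End.mem_eigenspace_iff.mp hx.1
        simpa [ContinuousLinearMap.coe_coe, ContinuousLinearMap.add_apply] using h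
      have hPx : P x = 0 := by
        have h := congrArg (fun v => P v) hTx
        simp only [map_add, map_smul] at h
        rw [hPEf x, hPFf x] at h
        have h2 : ((2 : ℂ) - (μ₀:ℂ)) • P x = 0 := by
          rw [sub_smul, two_smul, h, sub_self]
        rcases smul_eq_zero.mp h2 with h3 | h3
        · exfalso
          have h4 : (μ₀:ℂ) = 2 := (sub_eq_zero.mp h3).symm
          have : μ₀ = 2 := by exact_mod_cast h4
          linarith
        · exact h3
      have hEFx : E (F x) = ((μ₀:ℂ) - 1) • E x := by
        have h := congrArg (fun v => E v) hTx
        simp only [map_add, map_smul] at h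
        rw [hfE x] at h
        rw [sub_smul, one_smul]
        exact eq_sub_of_add_eq' h
      have hFEx : F (E x) = ((μ₀:ℂ) - 1) • F x := by
        have h := congrArg (fun v => F v) hTx
        simp only [map_add, map_smul] at h
        rw [hfF x] at h
        rw [sub_smul, one_smul]
        exact eq_sub_of_add_eq h
      have hEFx0 : E (F x) = 0 := by
        have : E (F x) = P x := by
          simpa [ContinuousLinearMap.mul_apply] using DFunLike.congr_fun hEFP x
        rw [this, hPx]
      have hFEx0 : F (E x) = 0 := by
        have : F (E x) = P x := by
          simpa [ContinuousLinearMap.mul_apply] using DFunLike.congr_fun hFEP x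
        rw [this, hPx]
      have hμ1 : μ₀ = 1 := by
        by_contra hne
        have hμC : (μ₀:ℂ) - 1 ≠ 0 := by
          intro h
          exact hne (by exact_mod_cast sub_eq_zero.mp h)
        have hEx0 : E x = 0 := by
          rcases smul_eq_zero.mp (hEFx0 ▸ hEFx).symm with h | h
          · exact absurd h hμC
          · exact h
        have hFx0 : F x = 0 := by
          rcases smul_eq_zero.mp (hFEx0 ▸ hFEx).symm with h | h
          · exact absurd h hμC
          · exact h
        have : (μ₀:ℂ) • x = 0 := by rw [← hTx, hEx0, hFx0, add_zero]
        rcases smul_eq_zero.mp this with h | h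
        · have : μ₀ = 0 := by exact_mod_cast h
          linarith
        · exact hxne h
      refine ⟨by rw [← hc]; norm_num, ?_⟩
      have : (1 - c : ℝ) = μ₀ := by rw [← hc, hμ1]; norm_num
      rw [this]
      exact hev₀
    · -- c > 0 : produce the eigenvector z for eigenvalue 1 - c
      have hnt : Nontrivial H := by
        obtain ⟨x, hx⟩ := hev₀.exists_hasEigenvector
        exact nontrivial_of_ne x 0 hx.2
      obtain ⟨x₀, hx₀s, hx₀max⟩ := (isCompact_sphere (0:H) 1).exists_isMaxOn
        (NormedSpace.sphere_nonempty.mpr zero_le_one) ((A.continuous.norm).continuousOn)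
      have hx₀n : ‖x₀‖ = 1 := mem_sphere_zero_iff_norm.mp hx₀s
      have hx₀ne : x₀ ≠ 0 := by
        intro h
        rw [h, norm_zero] at hx₀n
        norm_num at hx₀n
      have hAnorm : ‖A x₀‖ = c := by
        rw [hcdef]
        refine le_antisymm (by simpa [hx₀n] using A.le_opNorm x₀) ?_
        refine A.opNorm_le_bound (norm_nonneg _) fun x => ?_
        rcases eq_or_ne x 0 with rfl | hxz
        · simp
        · have hxn : (0:ℝ) < ‖x‖ := norm_pos_iff.mpr hxz
          have hmem : ((‖x‖:ℂ))⁻¹ • x ∈ Metric.sphere (0:H) 1 := by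
            rw [mem_sphere_zero_iff_norm, norm_smul, norm_inv, Complex.norm_real,
              Real.norm_eq_abs, abs_of_pos hxn, inv_mul_cancel₀ hxn.ne']
          have hle : ‖A (((‖x‖:ℂ))⁻¹ • x)‖ ≤ ‖A x₀‖ := hx₀max hmem
          rw [map_smul, norm_smul, norm_inv, Complex.norm_real,
            Real.norm_eq_abs, abs_of_pos hxn] at hle
          calc ‖A x‖ = ‖x‖ * (‖x‖⁻¹ * ‖A x‖) := by field_simp
          _ ≤ ‖x‖ * ‖A x₀‖ := by
              exact mul_le_mul_of_nonneg_left hle (norm_nonneg _)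
          _ = ‖A x₀‖ * ‖x‖ := mul_comm _ _
      have hmaxB : IsMaxOn B.reApplyInnerSelf (Metric.sphere (0:H) ‖x₀‖) x₀ := by
        rw [isMaxOn_iff]
        intro x hxs
        have hx1 : x ∈ Metric.sphere (0:H) 1 := by rwa [hx₀n] at hxs
        rw [h_reB, h_reB]
        exact pow_le_pow_left₀ (norm_nonneg _) (hx₀max hx1) 2
      have heig := hBsa.hasEigenvector_of_isLocalExtrOn hx₀ne (Or.inr hmaxB.localize)
      have hray : B.rayleighQuotient x₀ = c * c := by
        simp only [ContinuousLinearMap.rayleighQuotient, h_reB, hx₀n, hAnorm]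
        norm_num
        ring
      have hy : B x₀ = ((c * c : ℝ) : ℂ) • x₀ := by
        have h := heig.apply_eq_smul
        rw [hray] at h
        exact h
      set y := x₀ with hydef
      have hBy' : F (E (F y)) - P y = ((c*c : ℝ):ℂ) • y := by rw [← hBf, hy]
      have hcc_ne : ((c*c:ℝ):ℂ) ≠ 0 := by
        simp only [ne_eq, Complex.ofReal_eq_zero]
        positivity
      have hPy : P y = 0 := by
        have h := congrArg (fun v => P v) hBy'
        simp only [map_sub, map_smul] at h
        rw [hPFf, hPEf, hPFf, hPPf] at h
        rw [sub_self] at h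
        rcases smul_eq_zero.mp h.symm with h3 | h3
        · exact absurd h3 hcc_ne
        · exact h3
      have hFEFy : F (E (F y)) = ((c*c:ℝ):ℂ) • y := by
        rw [← hBy', hPy, sub_zero]
      have hFy : F y = y := by
        have h := congrArg (fun v => F v) hFEFy
        simp only [map_smul] at h
        rw [hfF (E (F y)), hFEFy] at h
        have h2 : ((c*c:ℝ):ℂ) • (y - F y) = 0 := by rw [smul_sub, h, sub_self]
        rcases smul_eq_zero.mp h2 with h3 | h3
        · exact absurd h3 hcc_ne
        · exact (sub_eq_zero.mp h3).symm
      have hAy : A y = E y := by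
        have : A y = E (F y) - P y := by
          simp [hAdef, ContinuousLinearMap.sub_apply, ContinuousLinearMap.mul_apply]
        rw [this, hFy, hPy, sub_zero]
      have hEy2 : ‖E y‖ ^ 2 = c * c := by
        have h := h_reB y
        rw [hAy] at h
        rw [ContinuousLinearMap.reApplyInnerSelf_apply, hy, inner_smul_left,
          Complex.conj_ofReal, inner_self_eq_norm_sq_to_K, hx₀n] at h
        rw [← h]
        norm_num
      have hEyle : ‖E y‖ ≤ 1 := by
        have hsym := hE₂.isSymmetric
        have hEq : (inner ℂ (E y) (E y) : ℂ) = inner ℂ y (E y) := by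
          have h := hsym y (E y)
          simp only [ContinuousLinearMap.coe_coe] at h
          rw [h, hfE y]
        have h1 : ‖E y‖ ^ 2 = RCLike.re (inner ℂ y (E y) : ℂ) := by
          rw [← hEq, inner_self_eq_norm_sq]
        have h2 : RCLike.re (inner ℂ y (E y) : ℂ) ≤ ‖y‖ * ‖E y‖ := re_inner_le_norm _ _
        rw [hx₀n, one_mul] at h2
        nlinarith [norm_nonneg (E y)]
      have hc1 : c < 1 := by
        have hle1 : c ≤ 1 := by nlinarith [hEy2, hEyle, hc, norm_nonneg (E y), sq_nonneg (c - 1)]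
        rcases lt_or_eq_of_le hle1 with h | h
        · exact h
        · exfalso
          have hEy1 : ‖E y‖ = 1 := by nlinarith [norm_nonneg (E y)]
          have hrey : RCLike.re (inner ℂ y (E y) : ℂ) = 1 := by
            have hsym := hE₂.isSymmetric
            have hEq : (inner ℂ (E y) (E y) : ℂ) = inner ℂ y (E y) := by
              have h := hsym y (E y)
              simp only [ContinuousLinearMap.coe_coe] at h
              rw [h, hfE y]
            rw [← hEq, inner_self_eq_norm_sq, hEy1]
            norm_num
          have hsub : ‖y - E y‖ ^ 2 = 0 := by
            rw [@norm_sub_sq ℂ, hrey, hx₀n, hEy1]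
            norm_num
          have hEyy : E y = y := by
            have := pow_eq_zero_iff (n := 2) (by norm_num) |>.mp hsub
            rw [norm_eq_zero, sub_eq_zero] at this
            exact this.symm
          have hyK : y ∈ LinearMap.range (E : H →ₗ[ℂ] H) ⊓ LinearMap.range (F : H →ₗ[ℂ] H) :=
            Submodule.mem_inf.mpr ⟨⟨y, hEyy⟩, ⟨y, hFy⟩⟩
          have : y = 0 := by rw [← hPfix y hyK, hPy]
          exact hx₀ne this
      have hcC : (c:ℂ) ≠ 0 := Complex.ofReal_ne_zero.mpr hc.ne'
      set z : H := y - ((c:ℂ))⁻¹ • E y with hzdef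
      have hEz : E z = (1 - (c:ℂ)⁻¹) • E y := by
        rw [hzdef, map_sub, map_smul, hfE, sub_smul, one_smul]
      have hFEy : F (E y) = ((c:ℂ)*(c:ℂ)) • y := by
        have h := hFEFy
        rw [hFy] at h
        rw [h]
        norm_num
      have hFz : F z = (1 - (c:ℂ)) • y := by
        rw [hzdef, map_sub, map_smul, hFy, hFEy, smul_smul]
        have : (c:ℂ)⁻¹ * ((c:ℂ) * (c:ℂ)) = (c:ℂ) := by field_simp
        rw [this, sub_smul, one_smul]
      have hTz : (E + F) z = ((1 - c : ℝ):ℂ) • z := by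
        rw [ContinuousLinearMap.add_apply, hEz, hFz, hzdef]
        rw [smul_sub, smul_smul]
        push_cast
        have hsc : (1 - (c:ℂ)⁻¹) = -((1 - (c:ℂ)) * (c:ℂ)⁻¹) := by field_simp; ring
        rw [hsc, neg_smul]
        abel
      have hzne : z ≠ 0 := by
        intro h0
        rw [hzdef, sub_eq_zero] at h0
        have h1 : E y = (c:ℂ)⁻¹ • E y := by
          conv_lhs => rw [h0, map_smul, hfE]
        have h2 : (1 - (c:ℂ)⁻¹) • E y = 0 := by
          rw [sub_smul, one_smul, ← h1, sub_self]
        have hinv : (1 : ℂ) - (c:ℂ)⁻¹ ≠ 0 := by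
          rw [sub_ne_zero]
          intro h
          have : (c:ℂ) = 1 := by
            field_simp at h
            simpa using h
          have : c = 1 := by exact_mod_cast this
          linarith
        rcases smul_eq_zero.mp h2 with h3 | h3
        · exact hinv h3
        · rw [h3, smul_zero] at h0
          exact hx₀ne h0
      refine ⟨by linarith, ?_⟩
      apply Module.End.hasEigenvalue_of_hasEigenvector (x := z)
      refine ⟨Module.End.mem_eigenspace_iff.mpr ?_, hzne⟩
      simpa [ContinuousLinearMap.coe_coe] using hTz
  · rintro μ ⟨hμpos, hev⟩
    exact key μ hμpos hev
end

section
/- Let E, F be orthogonal projections on a finite-dimensional Hilbert space, and suppose Υ is an eigenvector of E + F with eigenvalue 1 - α where α ∉ {-1, 0, 1}. Write Υ = φ + ψ with φ ∈ range(E) ∩ (range(E) ∩ range(F))^⊥ and ψ ∈ range(F) ∩ (range(E) ∩ range(F))^⊥. Then Eψ = -αφ and Fφ = -αψ. -/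
/-- Eigenvector decomposition for `E + F`: if `Υ = φ + ψ` is an eigenvector of `E + F`
with eigenvalue `1 - α`, `α ∉ {-1, 0, 1}`, with `φ ∈ range E ∩ (range E ∩ range F)ᗮ`
and `ψ ∈ range F ∩ (range E ∩ range F)ᗮ`, then `Eψ = -αφ` and `Fφ = -αψ`. -/
theorem aklt_stmt_2 {H : Type*} [NormedAddCommGroup H] [InnerProductSpace ℂ H]
    [FiniteDimensional ℂ H] (E F : H →L[ℂ] H)
    (hE₁ : IsIdempotentElem E) (hE₂ : IsSelfAdjoint E)
    (hF₁ : IsIdempotentElem F) (hF₂ : IsSelfAdjoint F)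
    (α : ℝ) (hα : α ≠ -1 ∧ α ≠ 0 ∧ α ≠ 1)
    (Υ φ ψ : H) (hΥ : Υ ≠ 0)
    (heig : (E + F) Υ = ((1 : ℂ) - (α : ℂ)) • Υ)
    (hdecomp : Υ = φ + ψ)
    (hφ : φ ∈ LinearMap.range (E : H →ₗ[ℂ] H) ⊓ (LinearMap.range (E : H →ₗ[ℂ] H) ⊓ LinearMap.range (F : H →ₗ[ℂ] H))ᗮ)
    (hψ : ψ ∈ LinearMap.range (F : H →ₗ[ℂ] H) ⊓ (LinearMap.range (E : H →ₗ[ℂ] H) ⊓ LinearMap.range (F : H →ₗ[ℂ] H))ᗮ) :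
    E ψ = (-(α : ℂ)) • φ ∧ F φ = (-(α : ℂ)) • ψ := by
  obtain ⟨⟨yφ, hyφ⟩, hφperp⟩ := hφ
  obtain ⟨⟨yψ, hyψ⟩, hψperp⟩ := hψ
  have hEφ : E φ = φ := by
    have := congrArg (fun T : H →L[ℂ] H => T yφ) hE₁
    simpa [ContinuousLinearMap.mul_apply, ← hyφ] using this
  have hFψ : F ψ = ψ := by
    have := congrArg (fun T : H →L[ℂ] H => T yψ) hF₁
    simpa [ContinuousLinearMap.mul_apply, ← hyψ] using this
  have hEE : ∀ v : H, E (E v) = E v := fun v => by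
    have := congrArg (fun T : H →L[ℂ] H => T v) hE₁
    simpa [ContinuousLinearMap.mul_apply] using this
  have hFF : ∀ v : H, F (F v) = F v := fun v => by
    have := congrArg (fun T : H →L[ℂ] H => T v) hF₁
    simpa [ContinuousLinearMap.mul_apply] using this
  -- key equation
  have key : E ψ + F φ = (-(α : ℂ)) • φ + (-(α : ℂ)) • ψ := by
    have h := heig
    rw [hdecomp] at h
    simp only [ContinuousLinearMap.add_apply, map_add, hEφ, hFψ, smul_add,
      sub_smul, one_smul] at h
    linear_combination (norm := module) h
  set x : H := E ψ + (α : ℂ) • φ with hx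
  have hx2 : F φ + (α : ℂ) • ψ = -x := by
    have : F φ = (-(α : ℂ)) • φ + (-(α : ℂ)) • ψ - E ψ := by
      rw [← key]; abel
    rw [this, hx]; simp [neg_smul]; abel
  have hxE : x ∈ LinearMap.range (E : H →ₗ[ℂ] H) := ⟨ψ + (α : ℂ) • yφ, by
    simp [map_add, map_smul, hyφ, hx]⟩
  have hxeq : x = -(F φ + (α : ℂ) • ψ) := by rw [hx2, neg_neg]
  have hxF : x ∈ LinearMap.range (F : H →ₗ[ℂ] H) := ⟨x, by
    conv_lhs => rw [hxeq]
    rw [map_neg, map_add, map_smul, ContinuousLinearMap.coe_coe, hFF, hFψ, ← hxeq]⟩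
  have hxperp : x ∈ (LinearMap.range (E : H →ₗ[ℂ] H) ⊓ LinearMap.range (F : H →ₗ[ℂ] H))ᗮ := by
    intro v hv
    obtain ⟨⟨zv, hzv⟩, -⟩ := id hv
    have hEv : E v = v := by rw [← hzv, ContinuousLinearMap.coe_coe, hEE]
    have h1 : inner ℂ v (E ψ) = (0 : ℂ) := by
      have : inner ℂ (E v) ψ = (inner ℂ v (E ψ) : ℂ) := by
        rw [← ContinuousLinearMap.adjoint_inner_left,
          ContinuousLinearMap.isSelfAdjoint_iff'.mp hE₂]
      rw [← this, hEv]
      exact hψperp v hv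
    have h2 : inner ℂ v φ = (0 : ℂ) := hφperp v hv
    rw [hx, inner_add_right, inner_smul_right, h1, h2]
    simp
  have hx0 : x = 0 := by
    have := hxperp x ⟨hxE, hxF⟩
    exact inner_self_eq_zero.mp this
  constructor
  · have : E ψ = x - (α : ℂ) • φ := by rw [hx]; abel
    rw [this, hx0, neg_smul]; abel
  · have : F φ = -x - (α : ℂ) • ψ := by rw [← hx2]; abel
    rw [this, hx0, neg_smul]; abel
end

section
/- Let E, F be orthogonal projections on a finite-dimensional Hilbert space and suppose Υ = φ + ψ is an eigenvector of E + F with eigenvalue 1 - α, α ∉ {-1,0,1}, where φ ∈ range(E), ψ ∈ range(F), Eψ = -αφ + θ and Fφ = -αψ - θ with θ ∈ range(E) ∩ range(F) and θ orthogonal to both φ and ψ. Then θ = 0. -/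
open scoped InnerProductSpace

/-- If `Υ = φ + ψ` is an eigenvector of `E + F` with eigenvalue `1 - α`, `α ∉ {-1,0,1}`,
where `φ ∈ V_E`, `ψ ∈ V_F`, `Eψ = -αφ + θ`, `Fφ = -αψ - θ` with
`θ ∈ range E ∩ range F` orthogonal to both `φ` and `ψ`, then `θ = 0`. -/
theorem aklt_stmt_3 {H : Type*} [NormedAddCommGroup H] [InnerProductSpace ℂ H]
    [FiniteDimensional ℂ H] (E F : H →L[ℂ] H)
    (hE₁ : IsIdempotentElem E) (hE₂ : IsSelfAdjoint E)
    (hF₁ : IsIdempotentElem F) (hF₂ : IsSelfAdjoint F)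
    (α : ℝ) (hα : α ≠ -1 ∧ α ≠ 0 ∧ α ≠ 1)
    (φ ψ θ : H) (hΥ : φ + ψ ≠ 0)
    (heig : (E + F) (φ + ψ) = ((1 : ℂ) - (α : ℂ)) • (φ + ψ))
    (hφ : φ ∈ LinearMap.range (E : H →ₗ[ℂ] H) ⊓ (LinearMap.range (E : H →ₗ[ℂ] H) ⊓ LinearMap.range (F : H →ₗ[ℂ] H))ᗮ)
    (hψ : ψ ∈ LinearMap.range (F : H →ₗ[ℂ] H) ⊓ (LinearMap.range (E : H →ₗ[ℂ] H) ⊓ LinearMap.range (F : H →ₗ[ℂ] H))ᗮ)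
    (hEψ : E ψ = (-(α : ℂ)) • φ + θ)
    (hFφ : F φ = (-(α : ℂ)) • ψ - θ)
    (hθ : θ ∈ LinearMap.range (E : H →ₗ[ℂ] H) ⊓ LinearMap.range (F : H →ₗ[ℂ] H))
    (hθφ : ⟪θ, φ⟫_ℂ = 0) (hθψ : ⟪θ, ψ⟫_ℂ = 0) :
    θ = 0 := by
  obtain ⟨⟨x, hx⟩, -⟩ := hθ
  have hEθ : E θ = θ := by
    rw [← hx, ContinuousLinearMap.coe_coe, ← ContinuousLinearMap.mul_apply, hE₁]
  have h1 : ⟪θ, E ψ⟫_ℂ = 0 := by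
    rw [← ContinuousLinearMap.adjoint_inner_left E, hE₂.adjoint_eq, hEθ, hθψ]
  rw [hEψ, inner_add_right, inner_smul_right, hθφ, mul_zero, zero_add,
    inner_self_eq_zero] at h1
  exact h1
end
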